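/- The cochain DG algebra B₁₁ with underlying graded algebra k⟨x₁,x₂⟩ (generators in degree 1) and differential ∂(x₁) = x₁² + x₂², ∂(x₂) = x₁x₂ + x₂x₁ has trivial cohomology: H⁰ = k and Hⁱ = 0 for all i ≥ 1. -/

import Mathlib

/-- The degree-`i` homogeneous component of the free algebra `k⟨x_1,...,x_n⟩`
with all generators in degree `1`: the span of the words of length `i`. -/
noncomputable def deg (k : Type*) [CommRing k] (n : ℕ) (i : ℕ) :
    Submodule k (FreeAlgebra k (Fin n)) :=
  Submodule.span k
    {w | ∃ f : Fin i → Fin n, w = (List.ofFn fun j => FreeAlgebra.ι k (f j)).prod}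

open FreeAlgebra FreeMonoid in
noncomputable def strip' {k : Type*} [Field k] (j : Fin 2) :
    List (Fin 2) → MonoidAlgebra k (FreeMonoid (Fin 2))
  | [] => 0
  | a :: t => if a = j then MonoidAlgebra.single (ofList t) 1 else 0

open FreeAlgebra FreeMonoid in
noncomputable def Pmap {k : Type*} [Field k] (j : Fin 2) :
    MonoidAlgebra k (FreeMonoid (Fin 2)) →ₗ[k] MonoidAlgebra k (FreeMonoid (Fin 2)) :=
  (Finsupp.lsum k fun w => LinearMap.toSpanSingleton k _ (strip' j (toList w))) ∘ₗ
    (MonoidAlgebra.coeffLinearEquiv k).toLinearMap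

section Aux

open FreeAlgebra FreeMonoid

variable {k : Type*} [Field k]

lemma Pmap_single_mul (j i : Fin 2) (m : MonoidAlgebra k (FreeMonoid (Fin 2))) :
    Pmap j (MonoidAlgebra.single (of i) 1 * m) = if i = j then m else 0 := by
  induction m using MonoidAlgebra.induction_linear with
  | zero => simp
  | add f g hf hg => rw [mul_add, map_add, hf, hg]; split <;> simp
  | single w c =>
    rw [MonoidAlgebra.single_mul_single, one_mul]
    show (Finsupp.lsum k fun w => LinearMap.toSpanSingleton k _ (strip' j (toList w)))
      (Finsupp.single (of i * w) c) = _
    rw [Finsupp.lsum_single]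
    simp only [LinearMap.toSpanSingleton_apply, toList_of_mul, strip']
    split
    · simp [MonoidAlgebra.smul_single]
    · simp

lemma cancel (u v : FreeAlgebra k (Fin 2)) (h : ι k 0 * u + ι k 1 * v = 0) :
    u = 0 ∧ v = 0 := by
  set E := FreeAlgebra.equivMonoidAlgebraFreeMonoid (R := k) (X := Fin 2) with hEdef
  have hE : ∀ i : Fin 2, E (ι k i) = MonoidAlgebra.single (of i) 1 := by
    intro i
    simp [hEdef, FreeAlgebra.equivMonoidAlgebraFreeMonoid, MonoidAlgebra.of_apply]
  have h' : MonoidAlgebra.single (of (0 : Fin 2)) (1 : k) * E u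
      + MonoidAlgebra.single (of (1 : Fin 2)) 1 * E v = 0 := by
    have := congrArg E h
    simpa [map_add, map_mul, hE] using this
  constructor
  · have := congrArg (Pmap (k := k) 0) h'
    rw [map_add, Pmap_single_mul, Pmap_single_mul] at this
    simp only [if_pos rfl, map_zero] at this
    norm_num at this
    exact this
  · have := congrArg (Pmap (k := k) 1) h'
    rw [map_add, Pmap_single_mul, Pmap_single_mul] at this
    simp only [map_zero] at this
    norm_num at this
    exact this

lemma decomp (i : ℕ) (a : FreeAlgebra k (Fin 2)) (ha : a ∈ deg k 2 (i + 1)) :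
    ∃ a₁ ∈ deg k 2 i, ∃ a₂ ∈ deg k 2 i, a = ι k 0 * a₁ + ι k 1 * a₂ := by
  induction ha using Submodule.span_induction with
  | mem w hw =>
    obtain ⟨f, rfl⟩ := hw
    have hsplit : (List.ofFn fun j : Fin (i + 1) => ι k (f j)).prod
        = ι k (f 0) * (List.ofFn fun j : Fin i => ι k (f j.succ)).prod := by
      rw [List.ofFn_succ, List.prod_cons]
    have htail : (List.ofFn fun j : Fin i => ι k (f j.succ)).prod ∈ deg k 2 i :=
      Submodule.subset_span ⟨fun j => f j.succ, rfl⟩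
    have h02 : f 0 = 0 ∨ f 0 = 1 := by
      rcases Fin.exists_fin_two.mp ⟨f 0, rfl⟩ with h | h <;> [exact Or.inl h; exact Or.inr h]
    rcases h02 with h0 | h0
    · exact ⟨_, htail, 0, (deg k 2 i).zero_mem, by rw [hsplit, h0]; simp⟩
    · exact ⟨0, (deg k 2 i).zero_mem, _, htail, by rw [hsplit, h0]; simp⟩
  | zero => exact ⟨0, (deg k 2 i).zero_mem, 0, (deg k 2 i).zero_mem, by simp⟩
  | add x y hx hy ihx ihy =>
    obtain ⟨a₁, ha₁, a₂, ha₂, rfl⟩ := ihx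
    obtain ⟨b₁, hb₁, b₂, hb₂, rfl⟩ := ihy
    exact ⟨a₁ + b₁, add_mem ha₁ hb₁, a₂ + b₂, add_mem ha₂ hb₂, by
      rw [mul_add, mul_add]; abel⟩
  | smul c x hx ihx =>
    obtain ⟨a₁, ha₁, a₂, ha₂, rfl⟩ := ihx
    exact ⟨c • a₁, Submodule.smul_mem _ c ha₁, c • a₂, Submodule.smul_mem _ c ha₂, by
      simp [smul_add, mul_smul_comm]⟩

lemma one_mem_deg0 : (1 : FreeAlgebra k (Fin 2)) ∈ deg k 2 0 :=
  Submodule.subset_span ⟨Fin.elim0, by simp⟩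

lemma iota_mem_deg1 (j : Fin 2) : ι k j ∈ deg k 2 1 :=
  Submodule.subset_span ⟨fun _ => j, by simp⟩

end Aux

/-- the cochain DG algebra `B₁₁` on `k⟨x₁,x₂⟩` with
`∂(x₁) = x₁² + x₂²`, `∂(x₂) = x₁x₂ + x₂x₁` has trivial cohomology:
`H⁰ = k` and `Hⁱ = 0` for all `i ≥ 1`. -/
theorem stmt19 {k : Type*} [Field k] [CharZero k]
    (d : FreeAlgebra k (Fin 2) →ₗ[k] FreeAlgebra k (Fin 2))
    (hL : ∀ (p : ℕ) (a b : FreeAlgebra k (Fin 2)), a ∈ deg k 2 p →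
      d (a * b) = d a * b + ((-1 : k) ^ p) • (a * d b))
    (h1 : d (FreeAlgebra.ι k 0) =
      FreeAlgebra.ι k 0 * FreeAlgebra.ι k 0 + FreeAlgebra.ι k 1 * FreeAlgebra.ι k 1)
    (h2 : d (FreeAlgebra.ι k 1) =
      FreeAlgebra.ι k 0 * FreeAlgebra.ι k 1 + FreeAlgebra.ι k 1 * FreeAlgebra.ι k 0)
    (hdd : ∀ x, d (d x) = 0) :
    (∀ a ∈ deg k 2 0, d a = 0) ∧
    (∀ i : ℕ, 1 ≤ i → ∀ a ∈ deg k 2 i, d a = 0 →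
      ∃ b ∈ deg k 2 (i - 1), d b = a) := by
  have hd1 : d 1 = 0 := by
    have h := hL 0 1 1 one_mem_deg0
    simp only [one_mul, mul_one, pow_zero, one_smul] at h
    have : d 1 + d 1 = d 1 + 0 := by rw [add_zero, ← h]
    exact (add_left_cancel this)
  constructor
  · intro a ha
    induction ha using Submodule.span_induction with
    | mem w hw =>
      obtain ⟨f, rfl⟩ := hw
      simpa using hd1
    | zero => simp
    | add x y _ _ hx hy => rw [map_add, hx, hy, add_zero]
    | smul c x _ hx => rw [map_smul, hx, smul_zero]
  · intro i hi a ha h0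
    obtain ⟨j, rfl⟩ : ∃ j, i = j + 1 := ⟨i - 1, (Nat.succ_pred_eq_of_pos hi).symm⟩
    obtain ⟨a₁, ha₁, a₂, ha₂, rfl⟩ := decomp j a ha
    set X := FreeAlgebra.ι k (0 : Fin 2) with hX
    set Y := FreeAlgebra.ι k (1 : Fin 2) with hY
    have e1 := hL 1 X a₁ (iota_mem_deg1 0)
    have e2 := hL 1 Y a₂ (iota_mem_deg1 1)
    rw [h1] at e1
    rw [h2] at e2
    simp only [pow_one, neg_smul, one_smul, ← hX, ← hY] at e1 e2
    have key : X * (X * a₁ + Y * a₂ - d a₁) + Y * (Y * a₁ + X * a₂ - d a₂) = 0 := by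
      have hsum : d (X * a₁) + d (Y * a₂) = 0 := by rw [← map_add]; exact h0
      rw [e1, e2] at hsum
      rw [← hsum]
      noncomm_ring
    obtain ⟨hu, -⟩ := cancel _ _ key
    refine ⟨a₁, by simpa using ha₁, ?_⟩
    rw [(sub_eq_zero.mp hu).symm]
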